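/- For every σ ≥ 1/√(2π) and μ ∈ ℝ, the DMIM of the Gaussian density φ(x) = (2πσ²)^{-1/2}·e^{-(x−μ)²/(2σ²)} satisfies |∫_ℝ φ(x)·e^{-φ(x)} dx − (1 − 1/(2√π·σ))| ≤ (e − 2)/(2√3·π·σ²), where e is Euler's number. -/

import Mathlib

open MeasureTheory Real

/-- `e^{-t} - 1 + t ≤ t²/2` for `t ≥ 0`. -/
lemma dmim_exp_neg_quad_bound {t : ℝ} (ht : 0 ≤ t) :
    Real.exp (-t) - 1 + t ≤ t ^ 2 / 2 := by
  have h1 : 1 + t + t ^ 2 / 2 ≤ Real.exp t := Real.quadratic_le_exp_of_nonneg ht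
  have hpos : (0:ℝ) < 1 + t + t ^ 2 / 2 := by positivity
  have h2 : Real.exp (-t) ≤ (1 + t + t ^ 2 / 2)⁻¹ := by
    rw [Real.exp_neg]
    exact inv_anti₀ hpos h1
  have h3 : (1 + t + t ^ 2 / 2)⁻¹ ≤ 1 - t + t ^ 2 / 2 := by
    rw [inv_le_iff_one_le_mul₀ hpos]
    nlinarith [sq_nonneg t, sq_nonneg (t^2)]
  nlinarith [h2.trans h3]

/-- Translated Gaussian integral. -/
lemma dmim_integral_gaussian_shift (b μ : ℝ) :
    (∫ x : ℝ, Real.exp (-b * (x - μ) ^ 2)) = Real.sqrt (π / b) := by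
  rw [integral_sub_right_eq_self (μ := volume) (fun x => Real.exp (-b * x ^ 2)) μ]
  exact integral_gaussian b

/-- For `σ ≥ 1/√(2π)`, the DMIM of the Gaussian density `φ` satisfies
`|∫ φ(x) e^{-φ(x)} dx - (1 - 1/(2√π·σ))| ≤ (e-2)/(2√3·π·σ²)`. -/
theorem dmim_gaussian_approx (σ μ : ℝ) (hσ : 1 / Real.sqrt (2 * π) ≤ σ) :
    |(∫ x : ℝ,
          ((Real.sqrt (2 * π * σ ^ 2))⁻¹ * Real.exp (-(x - μ) ^ 2 / (2 * σ ^ 2))) *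
            Real.exp
              (-((Real.sqrt (2 * π * σ ^ 2))⁻¹ * Real.exp (-(x - μ) ^ 2 / (2 * σ ^ 2))))) -
        (1 - 1 / (2 * Real.sqrt π * σ))| ≤
      (Real.exp 1 - 2) / (2 * Real.sqrt 3 * π * σ ^ 2) := by
  have hπ : (0:ℝ) < π := Real.pi_pos
  have hσ0 : (0:ℝ) < σ := lt_of_lt_of_le (by positivity) hσ
  set b : ℝ := (2 * σ ^ 2)⁻¹ with hb_def
  have hb : (0:ℝ) < b := by positivity
  set c : ℝ := (Real.sqrt (2 * π * σ ^ 2))⁻¹ with hc_def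
  have h2πσ : (0:ℝ) < 2 * π * σ ^ 2 := by positivity
  have hc0 : (0:ℝ) < c := by positivity
  set φ₀ : ℝ → ℝ := fun x => c * Real.exp (-b * (x - μ) ^ 2) with hφ₀
  have hφnn : ∀ x, 0 ≤ φ₀ x := fun x => by positivity
  have hφcont : Continuous φ₀ := by fun_prop
  -- rewrite the integrand
  have hrw : ∀ x : ℝ,
      ((Real.sqrt (2 * π * σ ^ 2))⁻¹ * Real.exp (-(x - μ) ^ 2 / (2 * σ ^ 2))) *
        Real.exp (-((Real.sqrt (2 * π * σ ^ 2))⁻¹ * Real.exp (-(x - μ) ^ 2 / (2 * σ ^ 2))))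
      = φ₀ x * Real.exp (-φ₀ x) := by
    intro x
    have h : -(x - μ) ^ 2 / (2 * σ ^ 2) = -b * (x - μ) ^ 2 := by
      rw [hb_def]; ring
    rw [h]
  rw [← hc_def] at hrw
  simp only [hrw]
  -- integrability facts
  have hgauss : ∀ k : ℝ, 0 < k →
      Integrable (fun x : ℝ => Real.exp (-(k * b) * (x - μ) ^ 2)) := by
    intro k hk
    exact (integrable_exp_neg_mul_sq (by positivity)).comp_sub_right μ
  have hpow : ∀ (n : ℕ) (x : ℝ), (φ₀ x) ^ n = c ^ n * Real.exp (-((n : ℝ) * b) * (x - μ) ^ 2) := by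
    intro n x
    rw [hφ₀]
    rw [mul_pow, ← Real.exp_nat_mul]
    ring_nf
  have hmoment : ∀ (n : ℕ), 0 < n →
      (∫ x : ℝ, (φ₀ x) ^ n) = c ^ n * Real.sqrt (π / ((n : ℝ) * b)) := by
    intro n hn
    simp only [hpow]
    rw [MeasureTheory.integral_const_mul, dmim_integral_gaussian_shift]
  have hIpow : ∀ (n : ℕ), 0 < n → Integrable (fun x => (φ₀ x) ^ n) := by
    intro n hn
    simp only [hpow]
    exact (hgauss n (by exact_mod_cast hn)).const_mul _
  have hA1 : Integrable φ₀ := by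
    have := hIpow 1 one_pos; simpa using this
  have hA2 : Integrable (fun x => (φ₀ x) ^ 2) := hIpow 2 two_pos
  have hA3 : Integrable (fun x => (φ₀ x) ^ 3) := hIpow 3 three_pos
  have hAfe : Integrable (fun x => φ₀ x * Real.exp (-φ₀ x)) := by
    refine hA1.mono ((hφcont.mul (Real.continuous_exp.comp hφcont.neg)).aestronglyMeasurable)
      (Filter.Eventually.of_forall fun x => ?_)
    have h1 : Real.exp (-φ₀ x) ≤ 1 := Real.exp_le_one_iff.2 (by linarith [hφnn x])
    have h2 : 0 ≤ φ₀ x * Real.exp (-φ₀ x) := by positivity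
    rw [Real.norm_eq_abs, Real.norm_eq_abs, abs_of_nonneg h2, abs_of_nonneg (hφnn x)]
    nlinarith [hφnn x, Real.exp_pos (-φ₀ x)]
  -- remainder
  set R : ℝ → ℝ := fun x => φ₀ x * (Real.exp (-φ₀ x) - 1 + φ₀ x) with hR
  have hAR : Integrable R := by
    have : R = fun x => (φ₀ x * Real.exp (-φ₀ x) - φ₀ x) + (φ₀ x) ^ 2 := by
      funext x; rw [hR]; ring
    rw [this]
    exact (hAfe.sub hA1).add hA2
  have hRnn : ∀ x, 0 ≤ R x := by
    intro x
    have := Real.add_one_le_exp (-φ₀ x)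
    have h := hφnn x
    apply mul_nonneg h
    linarith
  have hRle : ∀ x, R x ≤ (1/2) * (φ₀ x) ^ 3 := by
    intro x
    have h := dmim_exp_neg_quad_bound (hφnn x)
    have hx := hφnn x
    calc R x ≤ φ₀ x * ((φ₀ x) ^ 2 / 2) := by
          apply mul_le_mul_of_nonneg_left h hx
      _ = (1/2) * (φ₀ x) ^ 3 := by ring
  -- splitting the integral
  have hsplit : (∫ x : ℝ, φ₀ x * Real.exp (-φ₀ x))
      = (∫ x : ℝ, φ₀ x) - (∫ x : ℝ, (φ₀ x) ^ 2) + ∫ x : ℝ, R x := by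
    rw [show (fun x => φ₀ x * Real.exp (-φ₀ x))
        = (fun x => (φ₀ x - φ₀ x ^ 2) + R x) from funext fun x => by rw [hR]; ring]
    have hA12 : Integrable (fun x => φ₀ x - φ₀ x ^ 2) := hA1.sub hA2
    rw [integral_add hA12 hAR, integral_sub hA1 hA2]
  -- values of moments
  have hsq : Real.sqrt (2 * π * σ ^ 2) ^ 2 = 2 * π * σ ^ 2 := Real.sq_sqrt h2πσ.le
  have hsqrt_pos : (0:ℝ) < Real.sqrt (2 * π * σ ^ 2) := Real.sqrt_pos.2 h2πσ
  have hM1 : (∫ x : ℝ, φ₀ x) = 1 := by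
    have h := hmoment 1 one_pos
    simp only [pow_one, Nat.cast_one] at h
    rw [h]
    have h1 : π / ((1:ℝ) * b) = 2 * π * σ ^ 2 := by
      rw [hb_def]; field_simp
    rw [h1, hc_def]
    exact inv_mul_cancel₀ (ne_of_gt hsqrt_pos)
  have hc2 : c ^ 2 = (2 * π * σ ^ 2)⁻¹ := by
    rw [hc_def, inv_pow, hsq]
  have hπs : (0:ℝ) < Real.sqrt π := Real.sqrt_pos.2 hπ
  have hπsq : Real.sqrt π ^ 2 = π := Real.sq_sqrt hπ.le
  have hM2 : (∫ x : ℝ, (φ₀ x) ^ 2) = 1 / (2 * Real.sqrt π * σ) := by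
    have h := hmoment 2 two_pos
    simp only [Nat.cast_ofNat] at h
    rw [h]
    have h1 : π / ((2:ℝ) * b) = π * σ ^ 2 := by rw [hb_def]; field_simp
    rw [h1]
    have h2 : Real.sqrt (π * σ ^ 2) = Real.sqrt π * σ := by
      rw [Real.sqrt_mul hπ.le, Real.sqrt_sq hσ0.le]
    rw [h2, hc2, eq_div_iff (by positivity)]
    field_simp
    nlinarith [hπsq]
  have h3s : (0:ℝ) < Real.sqrt 3 := Real.sqrt_pos.2 (by norm_num)
  have h3sq : Real.sqrt 3 ^ 2 = 3 := Real.sq_sqrt (by norm_num)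
  have hM3 : (∫ x : ℝ, (φ₀ x) ^ 3) = 1 / (2 * Real.sqrt 3 * π * σ ^ 2) := by
    have h := hmoment 3 three_pos
    simp only [Nat.cast_ofNat] at h
    rw [h]
    have h1 : π / ((3:ℝ) * b) = (2 * π * σ ^ 2) / 3 := by rw [hb_def]; field_simp
    rw [h1, Real.sqrt_div h2πσ.le]
    have hcmul : c * Real.sqrt (2 * π * σ ^ 2) = 1 := inv_mul_cancel₀ hsqrt_pos.ne'
    have h3 : c ^ 3 * (Real.sqrt (2 * π * σ ^ 2) / Real.sqrt 3)
        = (c * Real.sqrt (2 * π * σ ^ 2)) * ((2 * π * σ ^ 2)⁻¹ / Real.sqrt 3) := by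
      rw [← hc2]; ring
    rw [h3, hcmul, one_mul, div_eq_div_iff (by positivity) (by positivity)]
    field_simp
  -- remainder integral bound
  have hIR : (∫ x : ℝ, R x) ≤ (1/2) * (1 / (2 * Real.sqrt 3 * π * σ ^ 2)) := by
    calc (∫ x : ℝ, R x) ≤ ∫ x : ℝ, (1/2) * (φ₀ x) ^ 3 :=
          integral_mono hAR (hA3.const_mul _) hRle
      _ = (1/2) * (1 / (2 * Real.sqrt 3 * π * σ ^ 2)) := by
          rw [MeasureTheory.integral_const_mul, hM3]
  have hIRnn : (0:ℝ) ≤ ∫ x : ℝ, R x := integral_nonneg hRnn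
  have he : (2.5:ℝ) ≤ Real.exp 1 := by
    have := Real.exp_one_gt_d9
    linarith
  rw [hsplit, hM1, hM2]
  rw [show (1 : ℝ) - 1 / (2 * Real.sqrt π * σ) + (∫ x : ℝ, R x)
      - (1 - 1 / (2 * Real.sqrt π * σ)) = ∫ x : ℝ, R x from by ring]
  rw [abs_of_nonneg hIRnn]
  calc (∫ x : ℝ, R x) ≤ (1/2) * (1 / (2 * Real.sqrt 3 * π * σ ^ 2)) := hIR
    _ ≤ (Real.exp 1 - 2) / (2 * Real.sqrt 3 * π * σ ^ 2) := by
        rw [show (1/2 : ℝ) * (1 / (2 * Real.sqrt 3 * π * σ ^ 2))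
            = (1/2) / (2 * Real.sqrt 3 * π * σ ^ 2) from by ring]
        gcongr
        linarith
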